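/- arXiv:1603.01288 — 2 statements merged into one kernel-verified Lean document; each statement's English description precedes it below -/
import Mathlib

section
/- Let X be an ideal of L⁰(Ω, Σ, ℙ) containing the constants and admitting a strictly positive order continuous linear functional, and let f ∈ X₊ with σ(f) = Σ. Then for every g ∈ X there exists a sequence (g_n) in the option space O_f = span{1, (f−k)⁺ : k ∈ ℝ} with g_n → g almost everywhere; in particular O_f is σ(X, X_n^∼)-dense in X. -/
open MeasureTheory Filter

universe u

variable {Ω : Type u}

/-- An ideal (solid subspace) of `L⁰`. -/
def IsIdealL0 {m0 : MeasurableSpace Ω} {μ : Measure Ω} (X : Submodule ℝ (Ω →ₘ[μ] ℝ)) : Prop :=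
  ∀ x y : Ω →ₘ[μ] ℝ, |x| ≤ |y| → y ∈ X → x ∈ X

/-- Order convergence of a net `y` to `x` within the subspace `X` of `L⁰`: there is a net
`z` in `X`, antitone, with infimum `0` relative to `X`, eventually dominating `|y a - x|`. -/
def OrderConvNetIn {m0 : MeasurableSpace Ω} {μ : Measure Ω} (X : Submodule ℝ (Ω →ₘ[μ] ℝ))
    {ι : Type*} [Preorder ι] (y : ι → (Ω →ₘ[μ] ℝ)) (x : Ω →ₘ[μ] ℝ) : Prop :=
  ∃ z : ι → (Ω →ₘ[μ] ℝ), (∀ a, z a ∈ X) ∧ Antitone z ∧ (∀ a, 0 ≤ z a) ∧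
    (∀ h ∈ X, (∀ a, h ≤ z a) → h ≤ 0) ∧ ∀ᶠ a in atTop, |y a - x| ≤ z a

/-- A subset `Y` of `X ⊆ L⁰` is order closed in `X` if it contains the limit of any net of
its elements order-converging (within `X`) to an element of `X`. -/
def OrderClosedIn {m0 : MeasurableSpace Ω} {μ : Measure Ω} (X : Submodule ℝ (Ω →ₘ[μ] ℝ))
    (Y : Set (Ω →ₘ[μ] ℝ)) : Prop :=
  ∀ (ι : Type u) (_ : Preorder ι) (_ : IsDirected ι (· ≤ ·)) (_ : Nonempty ι)
    (y : ι → (Ω →ₘ[μ] ℝ)) (x : Ω →ₘ[μ] ℝ),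
    (∀ a, y a ∈ Y) → x ∈ X → OrderConvNetIn X y x → x ∈ Y

/-- A functional on the subspace `X` of `L⁰` is order continuous if it carries nets
order-converging to `0` (within `X`) to nets converging to `0` in `ℝ`. -/
def OrderContinuousOn {m0 : MeasurableSpace Ω} {μ : Measure Ω}
    (X : Submodule ℝ (Ω →ₘ[μ] ℝ)) (φ : ↥X → ℝ) : Prop :=
  ∀ (ι : Type u) (_ : Preorder ι) (_ : IsDirected ι (· ≤ ·)) (_ : Nonempty ι)
    (y : ι → ↥X), OrderConvNetIn X (fun a => (y a : Ω →ₘ[μ] ℝ)) 0 →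
      Tendsto (fun a => φ (y a)) atTop (nhds 0)

/-- A functional on `X` is strictly positive if `φ(x) > 0` whenever `x > 0`. -/
def StrictlyPositiveOn {m0 : MeasurableSpace Ω} {μ : Measure Ω}
    (X : Submodule ℝ (Ω →ₘ[μ] ℝ)) (φ : ↥X → ℝ) : Prop :=
  ∀ x : ↥X, 0 < (x : Ω →ₘ[μ] ℝ) → 0 < φ x

/-- The weak topology `σ(X, Xₙ~)` induced on `X` by its order continuous dual. -/
noncomputable def weakOCTopology {m0 : MeasurableSpace Ω} {μ : Measure Ω}
    (X : Submodule ℝ (Ω →ₘ[μ] ℝ)) : TopologicalSpace ↥X :=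
  ⨅ φ ∈ {φ : ↥X →ₗ[ℝ] ℝ | OrderContinuousOn X ⇑φ},
    TopologicalSpace.induced ⇑φ inferInstance

/-- The option space `O_f = span{1, (f-k)⁺ : k ∈ ℝ}` of a claim `f ∈ L⁰`. -/
def optionSpace {m0 : MeasurableSpace Ω} {μ : Measure Ω} (f : Ω →ₘ[μ] ℝ) :
    Submodule ℝ (Ω →ₘ[μ] ℝ) :=
  Submodule.span ℝ ({1} ∪ {g | ∃ k : ℝ, g = (f - k • (1 : Ω →ₘ[μ] ℝ)) ⊔ 0})

open Set Topology

section Helpers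

variable {m0 : MeasurableSpace Ω} {μ : Measure Ω}

lemma aeq_le {u v : Ω →ₘ[μ] ℝ} (h : ∀ᵐ ω ∂μ, u ω ≤ v ω) : u ≤ v :=
  AEEqFun.coeFn_le.mp h

lemma le_aeq {u v : Ω →ₘ[μ] ℝ} (h : u ≤ v) : ∀ᵐ ω ∂μ, u ω ≤ v ω :=
  AEEqFun.coeFn_le.mpr h

lemma abs_aeq (u : Ω →ₘ[μ] ℝ) : ⇑|u| =ᵐ[μ] fun ω => |u ω| := AEEqFun.coeFn_abs u

lemma memX_of_bound {X : Submodule ℝ (Ω →ₘ[μ] ℝ)} (hX : IsIdealL0 X) {u v : Ω →ₘ[μ] ℝ}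
    (hv : v ∈ X) (h : ∀ᵐ ω ∂μ, |u ω| ≤ |v ω|) : u ∈ X := by
  refine hX u v (aeq_le ?_) hv
  filter_upwards [abs_aeq u, abs_aeq v, h] with ω e1 e2 e3
  rw [e1, e2]; exact e3

lemma absX_mem {X : Submodule ℝ (Ω →ₘ[μ] ℝ)} (hX : IsIdealL0 X) {v : Ω →ₘ[μ] ℝ}
    (hv : v ∈ X) : |v| ∈ X :=
  memX_of_bound hX hv (by filter_upwards [abs_aeq v] with ω e; rw [e, abs_abs])

lemma abs_sub_le_aeq {a b w : Ω →ₘ[μ] ℝ} (h : ∀ᵐ ω ∂μ, |a ω - b ω| ≤ w ω) : |a - b| ≤ w := by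
  refine aeq_le ?_
  filter_upwards [abs_aeq (a - b), AEEqFun.coeFn_sub a b, h] with ω e1 e2 e3
  rw [e1, e2]; exact e3

lemma coeFn_finsetSum {ι : Type*} (s : Finset ι) (g : ι → Ω →ₘ[μ] ℝ) :
    ⇑(∑ i ∈ s, g i) =ᵐ[μ] fun ω => ∑ i ∈ s, g i ω := by
  classical
  induction s using Finset.induction with
  | empty => simp only [Finset.sum_empty]; exact AEEqFun.coeFn_zero
  | insert a s' hx ih =>
    rw [Finset.sum_insert hx]
    filter_upwards [AEEqFun.coeFn_add (g a) (∑ i ∈ s', g i), ih] with ω h1 h2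
    rw [h1]
    simp only [Pi.add_apply, h2, Finset.sum_insert hx]

lemma call_spread (t k c : ℝ) (hc : 0 < c) :
    c * max (t - k) 0 - c * max (t - (k + 1/c)) 0 = min (c * max (t - k) 0) 1 := by
  have hc' : 0 < 1/c := by positivity
  rcases le_or_gt t k with h1 | h1
  · rw [max_eq_right (by linarith), max_eq_right (by linarith : t - (k + 1/c) ≤ 0)]
    norm_num
  · rcases le_or_gt t (k + 1/c) with h2 | h2
    · rw [max_eq_left (by linarith), max_eq_right (by linarith)]
      have h3 : c * (t - k) ≤ c * (1/c) := mul_le_mul_of_nonneg_left (by linarith) hc.le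
      rw [mul_one_div, div_self hc.ne'] at h3
      rw [min_eq_left h3]; ring
    · rw [max_eq_left (by linarith), max_eq_left (by linarith)]
      have h3 : 1 ≤ c * (t - k) := by
        calc (1:ℝ) = c * (1/c) := by field_simp
          _ ≤ c * (t - k) := mul_le_mul_of_nonneg_left (by linarith) hc.le
      rw [min_eq_right h3]
      field_simp
      ring

lemma tendsto_min_indicator (t k : ℝ) :
    Tendsto (fun n : ℕ => min (((n:ℝ)+1) * max (t - k) 0) 1) atTop
      (nhds (if k < t then (1:ℝ) else 0)) := by
  rcases lt_or_ge k t with h | h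
  · rw [if_pos h]
    have h0 : 0 < t - k := by linarith
    apply tendsto_atTop_of_eventually_const (i₀ := ⌈1/(t-k)⌉₊)
    intro n hn
    have h1 : 1/(t-k) ≤ (n:ℝ) := Nat.ceil_le.1 hn
    rw [div_le_iff₀ h0] at h1
    rw [max_eq_left h0.le, min_eq_right (by nlinarith)]
  · rw [if_neg (not_lt.2 h)]
    have : ∀ n : ℕ, min (((n:ℝ)+1) * max (t - k) 0) 1 = 0 := by
      intro n
      rw [max_eq_right (by linarith), mul_zero, min_eq_left zero_le_one]
    simp only [this]
    exact tendsto_const_nhds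

lemma clamp_abs (t c : ℝ) (hc : 0 ≤ c) : |max (-c) (min t c) - t| ≤ |t| := by
  rcases le_total t c with h | h
  · rcases le_total (-c) t with h' | h'
    · rw [min_eq_left h, max_eq_right h']; simp
    · rw [min_eq_left h, max_eq_left h']
      have ht : t ≤ 0 := le_trans h' (by linarith)
      rw [abs_of_nonpos ht, abs_of_nonneg (by linarith : (0:ℝ) ≤ -c - t)]
      linarith
  · rw [min_eq_right h, max_eq_right (by linarith : -c ≤ c)]
    have ht : 0 ≤ t := le_trans hc h
    rw [abs_of_nonneg ht, abs_of_nonpos (by linarith : c - t ≤ 0)]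
    linarith

lemma clamp_tendsto (t : ℝ) :
    Tendsto (fun n : ℕ => max (-(n:ℝ)) (min t (n:ℝ))) atTop (nhds t) := by
  apply tendsto_atTop_of_eventually_const (i₀ := ⌈|t|⌉₊)
  intro n hn
  have h1 : |t| ≤ (n:ℝ) := le_trans (Nat.le_ceil _) (by exact_mod_cast hn)
  rw [min_eq_left (le_trans (le_abs_self t) h1),
    max_eq_right (by linarith [neg_abs_le t])]

/-- in-measure convergence: congruence -/
lemma tim_congr {a a' : ℕ → Ω → ℝ} {A A' : Ω → ℝ} (ha : ∀ n, a n =ᵐ[μ] a' n)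
    (hA : A =ᵐ[μ] A') (h : TendstoInMeasure μ a atTop A) : TendstoInMeasure μ a' atTop A' := by
  rw [tendstoInMeasure_iff_dist] at h ⊢
  intro ε hε
  have key : ∀ n, μ {ω | ε ≤ dist (a' n ω) (A' ω)} = μ {ω | ε ≤ dist (a n ω) (A ω)} := by
    intro n
    apply measure_congr
    apply Filter.eventuallyEq_set.2
    filter_upwards [ha n, hA] with ω h1 h2
    rw [h1, h2]
  simpa only [key] using h ε hε

lemma tim_add {a b : ℕ → Ω → ℝ} {A B : Ω → ℝ} (ha : TendstoInMeasure μ a atTop A)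
    (hb : TendstoInMeasure μ b atTop B) :
    TendstoInMeasure μ (fun n ω => a n ω + b n ω) atTop (fun ω => A ω + B ω) := by
  rw [tendstoInMeasure_iff_dist] at ha hb ⊢
  intro ε hε
  refine tendsto_of_tendsto_of_tendsto_of_le_of_le
    (tendsto_const_nhds : Tendsto (fun (_ : ℕ) => (0 : ENNReal)) atTop (nhds 0))
    (by simpa using (ha (ε/2) (by linarith)).add (hb (ε/2) (by linarith)))
    (fun n => zero_le) (fun n => ?_)
  refine le_trans (measure_mono ?_) (measure_union_le _ _)
  intro ω hω
  simp only [Set.mem_setOf_eq, Real.dist_eq] at hω ⊢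
  by_contra hc
  simp only [Set.mem_union, Set.mem_setOf_eq, Real.dist_eq, not_or, not_le] at hc
  have : |a n ω + b n ω - (A ω + B ω)| ≤ |a n ω - A ω| + |b n ω - B ω| := by
    calc |a n ω + b n ω - (A ω + B ω)| = |(a n ω - A ω) + (b n ω - B ω)| := by ring_nf
      _ ≤ _ := abs_add_le _ _
  linarith [hc.1, hc.2]

lemma tim_smul {a : ℕ → Ω → ℝ} {A : Ω → ℝ} (c : ℝ) (ha : TendstoInMeasure μ a atTop A) :
    TendstoInMeasure μ (fun n ω => c * a n ω) atTop (fun ω => c * A ω) := by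
  rw [tendstoInMeasure_iff_dist] at ha ⊢
  intro ε hε
  have hpos : 0 < ε / (|c| + 1) := by positivity
  refine tendsto_of_tendsto_of_tendsto_of_le_of_le
    (tendsto_const_nhds : Tendsto (fun (_ : ℕ) => (0 : ENNReal)) atTop (nhds 0))
    (ha _ hpos) (fun n => zero_le) (fun n => measure_mono ?_)
  intro ω hω
  simp only [Set.mem_setOf_eq, Real.dist_eq] at hω ⊢
  have h1 : |c * a n ω - c * A ω| = |c| * |a n ω - A ω| := by
    rw [← abs_mul]; ring_nf
  have hc0 : 0 < |c| := by
    by_contra hc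
    push_neg at hc
    have : |c| = 0 := le_antisymm hc (abs_nonneg c)
    rw [h1, this, zero_mul] at hω; linarith
  rw [h1] at hω
  have : ε / |c| ≤ |a n ω - A ω| := (div_le_iff₀ hc0).2 (by linarith [hω, mul_comm |c| |a n ω - A ω|])
  refine le_trans ?_ this
  apply div_le_div_of_nonneg_left (le_of_lt hε) hc0 (by linarith)


lemma call_coeFn {m0 : MeasurableSpace Ω} {μ : Measure Ω} (f' : Ω →ₘ[μ] ℝ) (κ : ℝ) :
    ⇑((f' - κ • (1 : Ω →ₘ[μ] ℝ)) ⊔ 0) =ᵐ[μ] fun ω => max (f' ω - κ) 0 := by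
  filter_upwards [AEEqFun.coeFn_sup (f' - κ • (1 : Ω →ₘ[μ] ℝ)) 0,
    AEEqFun.coeFn_sub f' (κ • (1 : Ω →ₘ[μ] ℝ)), AEEqFun.coeFn_smul κ (1 : Ω →ₘ[μ] ℝ),
    AEEqFun.coeFn_zero (β := ℝ) (α := Ω) (μ := μ),
    AEEqFun.coeFn_one (β := ℝ) (α := Ω) (μ := μ)] with ω e1 e2 e3 e4 e5
  rw [e1, e2]
  simp only [Pi.sub_apply]
  rw [e3]
  simp only [Pi.smul_apply, smul_eq_mul]
  rw [e4, e5]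
  simp only [Pi.one_apply, Pi.zero_apply, mul_one]

lemma call_diff_coeFn {m0 : MeasurableSpace Ω} {μ : Measure Ω} (f' : Ω →ₘ[μ] ℝ) (k k' c : ℝ) :
    ⇑(c • ((f' - k • (1 : Ω →ₘ[μ] ℝ)) ⊔ 0) - c • ((f' - k' • (1 : Ω →ₘ[μ] ℝ)) ⊔ 0)) =ᵐ[μ]
      fun ω => c * max (f' ω - k) 0 - c * max (f' ω - k') 0 := by
  filter_upwards [AEEqFun.coeFn_sub (c • ((f' - k • (1 : Ω →ₘ[μ] ℝ)) ⊔ 0))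
      (c • ((f' - k' • (1 : Ω →ₘ[μ] ℝ)) ⊔ 0)),
    AEEqFun.coeFn_smul c ((f' - k • (1 : Ω →ₘ[μ] ℝ)) ⊔ 0),
    AEEqFun.coeFn_smul c ((f' - k' • (1 : Ω →ₘ[μ] ℝ)) ⊔ 0),
    call_coeFn f' k, call_coeFn f' k'] with ω e1 e2 e3 e4 e5
  rw [e1]
  simp only [Pi.sub_apply]
  rw [e2, e3]
  simp only [Pi.smul_apply, smul_eq_mul]
  rw [e4, e5]

end Helpers

section Master

variable {m0 : MeasurableSpace Ω} {μ : Measure Ω} [IsProbabilityMeasure μ]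

lemma master (X : Submodule ℝ (Ω →ₘ[μ] ℝ)) (hX : IsIdealL0 X)
    (hconst : ∀ c : ℝ, AEEqFun.const Ω (β := ℝ) c ∈ X)
    (f : ↥X)
    (hgen : ∀ A : Set Ω, MeasurableSet A →
      ∃ B : Set Ω, MeasurableSet[MeasurableSpace.comap (⇑(f : Ω →ₘ[μ] ℝ))
        (inferInstance : MeasurableSpace ℝ)] B ∧ μ (symmDiff A B) = 0)
    (Z : Set ↥X)
    (hS : ∀ x : ↥X, (x : Ω →ₘ[μ] ℝ) ∈ optionSpace (f : Ω →ₘ[μ] ℝ) → x ∈ Z)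
    (hadd : ∀ x y : ↥X, x ∈ Z → y ∈ Z → x + y ∈ Z)
    (hsmul : ∀ (c : ℝ) (x : ↥X), x ∈ Z → c • x ∈ Z)
    (hlim : ∀ (y : ℕ → ↥X) (x : ↥X) (w : Ω →ₘ[μ] ℝ), w ∈ X →
      (∀ n, y n ∈ Z) → (∀ n, |((y n : ↥X) : Ω →ₘ[μ] ℝ) - (x : Ω →ₘ[μ] ℝ)| ≤ w) →
      (∀ᵐ ω ∂μ, Tendsto (fun n => ((y n : ↥X) : Ω →ₘ[μ] ℝ) ω) atTop
        (nhds ((x : Ω →ₘ[μ] ℝ) ω))) →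
      x ∈ Z) :
    ∀ x : ↥X, x ∈ Z := by
  classical
  set f' : Ω →ₘ[μ] ℝ := (f : Ω →ₘ[μ] ℝ) with hf'def
  have hF : Measurable (⇑f') := f'.measurable
  -- X membership helpers
  have hdomX : ∀ (u : Ω →ₘ[μ] ℝ) (C : ℝ), (∀ᵐ ω ∂μ, |u ω| ≤ C) → u ∈ X := by
    intro u C h
    refine memX_of_bound hX (hconst C) ?_
    filter_upwards [h, AEEqFun.coeFn_const (α := Ω) (μ := μ) C] with ω h1 h2
    rw [h2]
    exact le_trans h1 (le_abs_self C)
  have honeX : (1 : Ω →ₘ[μ] ℝ) ∈ X := by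
    refine hdomX _ 1 ?_
    filter_upwards [AEEqFun.coeFn_one (β := ℝ) (α := Ω) (μ := μ)] with ω h1
    rw [h1]; norm_num
  have honeO : (1 : Ω →ₘ[μ] ℝ) ∈ optionSpace f' := Submodule.subset_span (Or.inl rfl)
  have hcallO : ∀ k : ℝ, ((f' - k • (1 : Ω →ₘ[μ] ℝ)) ⊔ 0) ∈ optionSpace f' := fun k =>
    Submodule.subset_span (Or.inr ⟨k, rfl⟩)
  have hcallX : ∀ k : ℝ, ((f' - k • (1 : Ω →ₘ[μ] ℝ)) ⊔ 0) ∈ X := by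
    intro k
    refine memX_of_bound hX
      (X.add_mem (absX_mem hX (show f' ∈ X from f.2)) (hconst |k|)) ?_
    filter_upwards [call_coeFn f' k,
      AEEqFun.coeFn_add (|f'|) (AEEqFun.const Ω (β := ℝ) |k|),
      abs_aeq f', AEEqFun.coeFn_const (α := Ω) (μ := μ) |k|] with ω e1 e6 e7 e8
    rw [e1, e6]
    simp only [Pi.add_apply]
    rw [e7, e8]
    simp only [Function.const_apply]
    have h0 : (0:ℝ) ≤ |f' ω| + |k| := by positivity
    have h1 : max (f' ω - k) 0 ≤ |f' ω| + |k| :=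
      max_le (by linarith [le_abs_self (f' ω), neg_abs_le k]) h0
    rw [abs_of_nonneg (le_max_right _ _ : (0:ℝ) ≤ max (f' ω - k) 0), abs_of_nonneg h0]
    exact h1
  -- the indicator predicate
  set C : Set Ω → Prop := fun B =>
    ∃ x : ↥X, (⇑(x : Ω →ₘ[μ] ℝ) =ᵐ[μ] B.indicator (fun _ => (1:ℝ))) ∧ x ∈ Z with hCdef
  have hCempty : C ∅ := by
    refine ⟨0, ?_, hS 0 (Submodule.zero_mem _)⟩
    have h0 : ((0 : ↥X) : Ω →ₘ[μ] ℝ) = 0 := rfl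
    rw [h0]
    filter_upwards [AEEqFun.coeFn_zero (β := ℝ) (α := Ω) (μ := μ)] with ω e
    simp [e]
  have hIoi : ∀ k : ℝ, C (⇑f' ⁻¹' Ioi k) := by
    intro k
    have hmeas : MeasurableSet (⇑f' ⁻¹' Ioi k) := hF measurableSet_Ioi
    have hindm : AEStronglyMeasurable ((⇑f' ⁻¹' Ioi k).indicator (fun _ => (1:ℝ))) μ :=
      ((measurable_const (a := (1:ℝ))).indicator hmeas).aestronglyMeasurable
    have hxtX : AEEqFun.mk _ hindm ∈ X := by
      refine hdomX _ 1 ?_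
      filter_upwards [AEEqFun.coeFn_mk _ hindm] with ω e
      rw [e, Set.indicator_apply]
      split_ifs <;> norm_num
    set u : ℕ → Ω →ₘ[μ] ℝ := fun n =>
      ((n:ℝ)+1) • ((f' - k • (1:Ω →ₘ[μ] ℝ)) ⊔ 0) -
        ((n:ℝ)+1) • ((f' - (k + 1/((n:ℝ)+1)) • (1:Ω →ₘ[μ] ℝ)) ⊔ 0) with hudef
    have huO : ∀ n, u n ∈ optionSpace f' := fun n =>
      Submodule.sub_mem _ (Submodule.smul_mem _ _ (hcallO k)) (Submodule.smul_mem _ _ (hcallO _))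
    have huX : ∀ n, u n ∈ X := fun n =>
      X.sub_mem (X.smul_mem _ (hcallX k)) (X.smul_mem _ (hcallX _))
    have hu_ae : ∀ n : ℕ, ∀ᵐ ω ∂μ, (u n) ω = min (((n:ℝ)+1) * max (f' ω - k) 0) 1 := by
      intro n
      have hc : (0:ℝ) < (n:ℝ)+1 := by positivity
      filter_upwards [call_diff_coeFn f' k (k + 1/((n:ℝ)+1)) ((n:ℝ)+1)] with ω e1
      have : (u n) ω = ((n:ℝ)+1) * max (f' ω - k) 0 -
          ((n:ℝ)+1) * max (f' ω - (k + 1/((n:ℝ)+1))) 0 := e1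
      rw [this, call_spread _ _ _ hc]
    refine ⟨⟨AEEqFun.mk _ hindm, hxtX⟩, AEEqFun.coeFn_mk _ hindm, ?_⟩
    refine hlim (fun n => ⟨u n, huX n⟩) _ (AEEqFun.const Ω (β := ℝ) 1) (hconst 1)
      (fun n => hS _ (huO n)) (fun n => ?_) ?_
    · -- domination by constant 1
      refine abs_sub_le_aeq ?_
      filter_upwards [hu_ae n, AEEqFun.coeFn_mk _ hindm,
        AEEqFun.coeFn_const (α := Ω) (μ := μ) (1:ℝ)] with ω e1 e2 e3
      rw [e1, e2, e3, Function.const_apply]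
      have h1 : 0 ≤ min (((n:ℝ)+1) * max (f' ω - k) 0) 1 := by positivity
      have h2 : min (((n:ℝ)+1) * max (f' ω - k) 0) 1 ≤ 1 := min_le_right _ _
      rw [Set.indicator_apply]
      split_ifs with h <;> rw [abs_le] <;> constructor <;> linarith
    · -- a.e. convergence
      have hall : ∀ᵐ ω ∂μ, ∀ n : ℕ, (u n) ω = min (((n:ℝ)+1) * max (f' ω - k) 0) 1 :=
        ae_all_iff.2 hu_ae
      filter_upwards [hall, AEEqFun.coeFn_mk _ hindm] with ω e1 e2
      rw [e2]
      have heq : (⇑f' ⁻¹' Ioi k).indicator (fun _ => (1:ℝ)) ω =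
          if k < f' ω then (1:ℝ) else 0 := by
        rw [Set.indicator_apply]
        simp [Set.mem_preimage, Set.mem_Ioi]
      rw [heq]
      exact (tendsto_min_indicator (f' ω) k).congr (fun n => (e1 n).symm)
  have hCcompl : ∀ B : Set Ω, C B → C Bᶜ := by
    rintro B ⟨x, hx, hz⟩
    refine ⟨⟨1, honeX⟩ + (-1 : ℝ) • x, ?_, hadd _ _ (hS ⟨1, honeX⟩ honeO) (hsmul _ _ hz)⟩
    have hcoe : ((⟨1, honeX⟩ + (-1 : ℝ) • x : ↥X) : Ω →ₘ[μ] ℝ) =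
        1 + (-1 : ℝ) • (x : Ω →ₘ[μ] ℝ) := rfl
    rw [hcoe]
    filter_upwards [AEEqFun.coeFn_add (1 : Ω →ₘ[μ] ℝ) ((-1 : ℝ) • (x : Ω →ₘ[μ] ℝ)),
      AEEqFun.coeFn_smul (-1 : ℝ) (x : Ω →ₘ[μ] ℝ),
      AEEqFun.coeFn_one (β := ℝ) (α := Ω) (μ := μ), hx] with ω e1 e2 e3 e4
    rw [e1]
    simp only [Pi.add_apply]
    rw [e2]
    simp only [Pi.smul_apply, smul_eq_mul]
    rw [e3, e4]
    simp only [Pi.one_apply]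
    by_cases h : ω ∈ B <;>
      simp [Set.indicator_apply, h]
  have hm'le : ∀ B : Set Ω,
      MeasurableSet[MeasurableSpace.comap (⇑f') (inferInstance : MeasurableSpace ℝ)] B →
      MeasurableSet B := by
    rintro B ⟨S, hSm, rfl⟩
    exact hF hSm
  have hCunion : ∀ g : ℕ → Set Ω, Pairwise (Function.onFun Disjoint g) → (∀ i, MeasurableSet (g i)) →
      (∀ i, C (g i)) → C (⋃ i, g i) := by
    intro g hdisj hgm hCg
    choose xs hxs hzs using hCg
    have hindm : AEStronglyMeasurable ((⋃ i, g i).indicator (fun _ => (1:ℝ))) μ :=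
      ((measurable_const (a := (1:ℝ))).indicator (MeasurableSet.iUnion hgm)).aestronglyMeasurable
    have hxtX : AEEqFun.mk _ hindm ∈ X := by
      refine hdomX _ 1 ?_
      filter_upwards [AEEqFun.coeFn_mk _ hindm] with ω e
      rw [e, Set.indicator_apply]
      split_ifs <;> norm_num
    set p : ℕ → ↥X := fun n => ∑ i ∈ Finset.range n, xs i with hpdef
    have hpZ : ∀ n, p n ∈ Z := by
      intro n
      induction n with
      | zero =>
        have : p 0 = 0 := by simp [hpdef]
        rw [this]
        exact hS 0 (Submodule.zero_mem _)
      | succ n ih =>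
        have : p (n+1) = p n + xs n := by simp [hpdef, Finset.sum_range_succ]
        rw [this]
        exact hadd _ _ ih (hzs n)
    have hp_coe : ∀ n, ((p n : ↥X) : Ω →ₘ[μ] ℝ) =
        ∑ i ∈ Finset.range n, ((xs i : ↥X) : Ω →ₘ[μ] ℝ) := by
      intro n
      simp [hpdef]
    have hp_ae : ∀ n, ∀ᵐ ω ∂μ, ((p n : ↥X) : Ω →ₘ[μ] ℝ) ω =
        ∑ i ∈ Finset.range n, (g i).indicator (fun _ => (1:ℝ)) ω := by
      intro n
      filter_upwards [coeFn_finsetSum (Finset.range n) (fun i => ((xs i : ↥X) : Ω →ₘ[μ] ℝ)),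
        ae_all_iff.2 (fun i => hxs i)] with ω e1 e2
      rw [hp_coe n, e1]
      exact Finset.sum_congr rfl (fun i _ => e2 i)
    have hkey : ∀ (ω : Ω) (n : ℕ),
        (∑ i ∈ Finset.range n, (g i).indicator (fun _ => (1:ℝ)) ω) =
          if ∃ i < n, ω ∈ g i then 1 else 0 := by
      intro ω n
      induction n with
      | zero => simp
      | succ n ih =>
        rw [Finset.sum_range_succ, ih]
        by_cases h : ω ∈ g n
        · have hnone : ¬ ∃ i < n, ω ∈ g i := by
            rintro ⟨i, hi, hgi⟩
            exact Set.disjoint_left.1 (hdisj hi.ne) hgi h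
          rw [if_neg hnone, if_pos ⟨n, Nat.lt_succ_self n, h⟩, Set.indicator_of_mem h]
          norm_num
        · rw [Set.indicator_of_notMem h]
          by_cases h2 : ∃ i < n, ω ∈ g i
          · obtain ⟨i, hi, hgi⟩ := h2
            rw [if_pos ⟨i, hi, hgi⟩, if_pos ⟨i, Nat.lt_succ_of_lt hi, hgi⟩]
            ring
          · rw [if_neg h2, if_neg ?_]
            · ring
            rintro ⟨i, hi, hgi⟩
            rcases Nat.lt_succ_iff_lt_or_eq.1 hi with h3 | rfl
            exacts [h2 ⟨i, h3, hgi⟩, h hgi]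
    refine ⟨⟨AEEqFun.mk _ hindm, hxtX⟩, AEEqFun.coeFn_mk _ hindm, ?_⟩
    refine hlim p _ (AEEqFun.const Ω (β := ℝ) 1) (hconst 1) hpZ (fun n => ?_) ?_
    · refine abs_sub_le_aeq ?_
      filter_upwards [hp_ae n, AEEqFun.coeFn_mk _ hindm,
        AEEqFun.coeFn_const (α := Ω) (μ := μ) (1:ℝ)] with ω e1 e2 e3
      rw [e1, e2, e3, Function.const_apply, hkey ω n, Set.indicator_apply]
      split_ifs <;> rw [abs_le] <;> constructor <;> norm_num
    · filter_upwards [ae_all_iff.2 hp_ae, AEEqFun.coeFn_mk _ hindm] with ω e1 e2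
      rw [e2, Set.indicator_apply]
      have hval : ∀ n, ((p n : ↥X) : Ω →ₘ[μ] ℝ) ω = if ∃ i < n, ω ∈ g i then 1 else 0 :=
        fun n => by rw [e1 n, hkey ω n]
      by_cases h : ω ∈ ⋃ i, g i
      · rw [if_pos h]
        obtain ⟨i0, hi0⟩ := Set.mem_iUnion.1 h
        apply tendsto_atTop_of_eventually_const (i₀ := i0 + 1)
        intro n hn
        rw [hval n, if_pos ⟨i0, lt_of_lt_of_le (Nat.lt_succ_self i0) hn, hi0⟩]
      · rw [if_neg h]
        have hz0 : ∀ n, ((p n : ↥X) : Ω →ₘ[μ] ℝ) ω = 0 := fun n => by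
          rw [hval n, if_neg]
          rintro ⟨i, _, hgi⟩
          exact h (Set.mem_iUnion.2 ⟨i, hgi⟩)
        exact tendsto_const_nhds.congr fun n => (hz0 n).symm
  -- all sets measurable w.r.t. σ(f) satisfy C
  have h_eq : MeasurableSpace.comap (⇑f') (inferInstance : MeasurableSpace ℝ) =
      MeasurableSpace.generateFrom {B : Set Ω | ∃ k : ℝ, B = ⇑f' ⁻¹' Ioi k} := by
    rw [show (inferInstance : MeasurableSpace ℝ) = borel ℝ from BorelSpace.measurable_eq,
      borel_eq_generateFrom_Ioi, MeasurableSpace.comap_generateFrom]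
    congr 1
    ext B
    constructor
    · rintro ⟨S, ⟨k, rfl⟩, rfl⟩
      exact ⟨k, rfl⟩
    · rintro ⟨k, rfl⟩
      exact ⟨Ioi k, ⟨k, rfl⟩, rfl⟩
  have h_pi : IsPiSystem {B : Set Ω | ∃ k : ℝ, B = ⇑f' ⁻¹' Ioi k} := by
    rintro s ⟨k1, rfl⟩ t ⟨k2, rfl⟩ -
    refine ⟨max k1 k2, ?_⟩
    rw [← Set.preimage_inter]
    congr 1
    ext r
    simp [max_lt_iff, and_comm]
  have hC_m' : ∀ B : Set Ω,
      MeasurableSet[MeasurableSpace.comap (⇑f') (inferInstance : MeasurableSpace ℝ)] B →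
      C B := by
    intro B hB
    refine @MeasurableSpace.induction_on_inter Ω
      (MeasurableSpace.comap (⇑f') (inferInstance : MeasurableSpace ℝ)) (fun s _ => C s)
      {B : Set Ω | ∃ k : ℝ, B = ⇑f' ⁻¹' Ioi k}
      h_eq h_pi hCempty ?_ ?_ ?_ B hB
    · rintro t ⟨k, rfl⟩
      exact hIoi k
    · intro t _ ht
      exact hCcompl t ht
    · intro g hdisj hgm hCg
      exact hCunion g hdisj (fun i => hm'le _ (hgm i)) hCg
  have hCall : ∀ A : Set Ω, MeasurableSet A → C A := by
    intro A hA
    obtain ⟨B, hBm', hAB⟩ := hgen A hA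
    obtain ⟨x, hx, hz⟩ := hC_m' B hBm'
    refine ⟨x, hx.trans ?_, hz⟩
    have hae : ∀ᵐ ω ∂μ, ω ∉ symmDiff A B := by
      rw [ae_iff]
      have hset : {ω | ¬ ω ∉ symmDiff A B} = symmDiff A B := by
        ext ω; simp
      rw [hset]
      exact hAB
    filter_upwards [hae] with ω hω
    rw [Set.mem_symmDiff] at hω
    push_neg at hω
    by_cases hb : ω ∈ B <;> by_cases ha2 : ω ∈ A <;>
      simp [Set.indicator_apply, hb, ha2] <;> tauto
  -- simple functions
  have hsimple : ∀ s : SimpleFunc Ω ℝ,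
      ∃ x : ↥X, (⇑(x : Ω →ₘ[μ] ℝ) =ᵐ[μ] ⇑s) ∧ x ∈ Z := by
    intro s
    refine SimpleFunc.induction ?_ ?_ s
    · intro c A hA
      obtain ⟨x, hx, hz⟩ := hCall A hA
      refine ⟨c • x, ?_, hsmul c x hz⟩
      have hcoe : ((c • x : ↥X) : Ω →ₘ[μ] ℝ) = c • (x : Ω →ₘ[μ] ℝ) := rfl
      rw [hcoe]
      filter_upwards [AEEqFun.coeFn_smul c (x : Ω →ₘ[μ] ℝ), hx] with ω e1 e2
      rw [e1]
      simp only [Pi.smul_apply, smul_eq_mul]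
      rw [e2]
      simp only [SimpleFunc.coe_piecewise, SimpleFunc.coe_const, Set.piecewise,
        Set.indicator_apply]
      split_ifs <;> simp
    · intro s1 s2 _ ih1 ih2
      obtain ⟨x1, hx1, hz1⟩ := ih1
      obtain ⟨x2, hx2, hz2⟩ := ih2
      refine ⟨x1 + x2, ?_, hadd _ _ hz1 hz2⟩
      have hcoe : ((x1 + x2 : ↥X) : Ω →ₘ[μ] ℝ) = (x1 : Ω →ₘ[μ] ℝ) + (x2 : Ω →ₘ[μ] ℝ) := rfl
      rw [hcoe]
      filter_upwards [AEEqFun.coeFn_add (x1 : Ω →ₘ[μ] ℝ) (x2 : Ω →ₘ[μ] ℝ), hx1, hx2]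
        with ω e1 e2 e3
      rw [e1]
      simp only [Pi.add_apply]
      rw [e2, e3]
      simp
  -- bounded measurable functions
  have hbdd : ∀ (G : Ω → ℝ), Measurable G → ∀ N : ℝ, 0 ≤ N → (∀ ω, G ω ∈ Icc (-N) N) →
      ∃ x : ↥X, (⇑(x : Ω →ₘ[μ] ℝ) =ᵐ[μ] G) ∧ x ∈ Z := by
    intro G hG N hN hGb
    have h0s : (0:ℝ) ∈ Icc (-N) N := ⟨neg_nonpos.2 hN, hN⟩
    set sf : ℕ → SimpleFunc Ω ℝ := fun n => SimpleFunc.approxOn G hG (Icc (-N) N) 0 h0s n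
      with hsfdef
    choose xs hxs hzs using fun n => hsimple (sf n)
    have hGm : AEStronglyMeasurable G μ := hG.aestronglyMeasurable
    have hmkX : AEEqFun.mk G hGm ∈ X := by
      refine hdomX _ N ?_
      filter_upwards [AEEqFun.coeFn_mk G hGm] with ω e
      rw [e]
      exact abs_le.2 ⟨(hGb ω).1, (hGb ω).2⟩
    refine ⟨⟨AEEqFun.mk G hGm, hmkX⟩, AEEqFun.coeFn_mk G hGm, ?_⟩
    refine hlim xs _ (AEEqFun.const Ω (β := ℝ) (2*N)) (hconst _) hzs (fun n => ?_) ?_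
    · refine abs_sub_le_aeq ?_
      filter_upwards [hxs n, AEEqFun.coeFn_mk G hGm,
        AEEqFun.coeFn_const (α := Ω) (μ := μ) (2*N)] with ω e1 e2 e3
      rw [e1, e2, e3, Function.const_apply]
      obtain ⟨ha, hb⟩ := SimpleFunc.approxOn_mem hG h0s n ω
      obtain ⟨hc, hd⟩ := hGb ω
      rw [abs_le]
      constructor <;> linarith
    · filter_upwards [ae_all_iff.2 hxs, AEEqFun.coeFn_mk G hGm] with ω e1 e2
      rw [e2]
      have ht : Tendsto (fun n => sf n ω) atTop (nhds (G ω)) :=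
        SimpleFunc.tendsto_approxOn hG h0s (by rw [(isClosed_Icc).closure_eq]; exact hGb ω)
      exact ht.congr fun n => (e1 n).symm
  -- general elements
  intro x
  have hGmeas : Measurable (⇑(x : Ω →ₘ[μ] ℝ)) := (x : Ω →ₘ[μ] ℝ).measurable
  have hclamp : ∀ n : ℕ, ∃ y : ↥X,
      (⇑(y : Ω →ₘ[μ] ℝ) =ᵐ[μ]
        fun ω => max (-(n:ℝ)) (min ((x : Ω →ₘ[μ] ℝ) ω) (n:ℝ))) ∧ y ∈ Z := by
    intro n
    refine hbdd _ (measurable_const.max (hGmeas.min measurable_const)) n (Nat.cast_nonneg n) ?_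
    intro ω
    exact ⟨le_max_left _ _,
      max_le (by simp [neg_nonpos.2 (Nat.cast_nonneg (α := ℝ) n)]
        ) (min_le_right _ _)⟩
  choose ys hys hzs using hclamp
  refine hlim ys x (|(x : Ω →ₘ[μ] ℝ)|) (absX_mem hX x.2) hzs (fun n => ?_) ?_
  · refine abs_sub_le_aeq ?_
    filter_upwards [hys n, abs_aeq (x : Ω →ₘ[μ] ℝ)] with ω e1 e2
    rw [e1, e2]
    exact clamp_abs ((x : Ω →ₘ[μ] ℝ) ω) n (Nat.cast_nonneg n)
  · filter_upwards [ae_all_iff.2 hys] with ω e1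
    exact (clamp_tendsto ((x : Ω →ₘ[μ] ℝ) ω)).congr fun n => (e1 n).symm


lemma part1 (X : Submodule ℝ (Ω →ₘ[μ] ℝ)) (hX : IsIdealL0 X)
    (hconst : ∀ c : ℝ, AEEqFun.const Ω (β := ℝ) c ∈ X)
    (f : ↥X)
    (hgen : ∀ A : Set Ω, MeasurableSet A →
      ∃ B : Set Ω, MeasurableSet[MeasurableSpace.comap (⇑(f : Ω →ₘ[μ] ℝ))
        (inferInstance : MeasurableSpace ℝ)] B ∧ μ (symmDiff A B) = 0) :
    ∀ g : ↥X, ∃ gn : ℕ → ↥X,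
      (∀ n, (gn n : Ω →ₘ[μ] ℝ) ∈ optionSpace (f : Ω →ₘ[μ] ℝ)) ∧
      ∀ᵐ ω ∂μ, Tendsto (fun n => (gn n : Ω →ₘ[μ] ℝ) ω) atTop
        (nhds ((g : Ω →ₘ[μ] ℝ) ω)) := by
  classical
  set Z : Set ↥X := {x | ∃ gn : ℕ → ↥X,
    (∀ n, (gn n : Ω →ₘ[μ] ℝ) ∈ optionSpace (f : Ω →ₘ[μ] ℝ)) ∧
    TendstoInMeasure μ (fun n => ⇑((gn n : ↥X) : Ω →ₘ[μ] ℝ)) atTop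
      ⇑((x : ↥X) : Ω →ₘ[μ] ℝ)} with hZdef
  have hall : ∀ x : ↥X, x ∈ Z := by
    refine master X hX hconst f hgen Z ?_ ?_ ?_ ?_
    · -- options themselves
      intro x hx
      refine ⟨fun _ => x, fun _ => hx, ?_⟩
      rw [tendstoInMeasure_iff_dist]
      intro ε hε
      have hset : {ω | ε ≤ dist (((x : ↥X) : Ω →ₘ[μ] ℝ) ω) (((x : ↥X) : Ω →ₘ[μ] ℝ) ω)} = ∅ := by
        ext ω
        simp only [Set.mem_setOf_eq, dist_self, Set.mem_empty_iff_false, iff_false, not_le]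
        exact hε
      simp only [hset, measure_empty]
      exact tendsto_const_nhds
    · -- addition
      rintro x y ⟨a, haO, haM⟩ ⟨b, hbO, hbM⟩
      refine ⟨fun n => a n + b n, fun n => Submodule.add_mem _ (haO n) (hbO n), ?_⟩
      refine tim_congr (a := fun n ω => ((a n : ↥X) : Ω →ₘ[μ] ℝ) ω + ((b n : ↥X) : Ω →ₘ[μ] ℝ) ω)
        (A := fun ω => ((x : ↥X) : Ω →ₘ[μ] ℝ) ω + ((y : ↥X) : Ω →ₘ[μ] ℝ) ω)
        (fun n => ?_) ?_ (tim_add haM hbM)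
      · filter_upwards [AEEqFun.coeFn_add ((a n : ↥X) : Ω →ₘ[μ] ℝ) ((b n : ↥X) : Ω →ₘ[μ] ℝ)]
          with ω e
        exact e.symm
      · filter_upwards [AEEqFun.coeFn_add ((x : ↥X) : Ω →ₘ[μ] ℝ) ((y : ↥X) : Ω →ₘ[μ] ℝ)]
          with ω e
        exact e.symm
    · -- scalar multiplication
      rintro c x ⟨a, haO, haM⟩
      refine ⟨fun n => c • a n, fun n => Submodule.smul_mem _ c (haO n), ?_⟩
      refine tim_congr (a := fun n ω => c * ((a n : ↥X) : Ω →ₘ[μ] ℝ) ω)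
        (A := fun ω => c * ((x : ↥X) : Ω →ₘ[μ] ℝ) ω)
        (fun n => ?_) ?_ (tim_smul c haM)
      · have hcoe : ((c • a n : ↥X) : Ω →ₘ[μ] ℝ) = c • ((a n : ↥X) : Ω →ₘ[μ] ℝ) := rfl
        rw [hcoe]
        filter_upwards [AEEqFun.coeFn_smul c ((a n : ↥X) : Ω →ₘ[μ] ℝ)] with ω e
        rw [e]
        simp [smul_eq_mul]
      · have hcoe : ((c • x : ↥X) : Ω →ₘ[μ] ℝ) = c • ((x : ↥X) : Ω →ₘ[μ] ℝ) := rfl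
        rw [hcoe]
        filter_upwards [AEEqFun.coeFn_smul c ((x : ↥X) : Ω →ₘ[μ] ℝ)] with ω e
        rw [e]
        simp [smul_eq_mul]
    · -- dominated a.e. limits
      intro y x w _ hyZ _ hae
      have hyM : TendstoInMeasure μ (fun n => ⇑((y n : ↥X) : Ω →ₘ[μ] ℝ)) atTop
          ⇑((x : ↥X) : Ω →ₘ[μ] ℝ) :=
        tendstoInMeasure_of_tendsto_ae
          (fun n => ((y n : ↥X) : Ω →ₘ[μ] ℝ).aestronglyMeasurable) hae
      have hpick : ∀ n : ℕ, ∃ o : ↥X, (o : Ω →ₘ[μ] ℝ) ∈ optionSpace (f : Ω →ₘ[μ] ℝ) ∧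
          μ {ω | (1/2:ℝ)^n ≤ dist (((o : ↥X) : Ω →ₘ[μ] ℝ) ω) (((y n : ↥X) : Ω →ₘ[μ] ℝ) ω)}
            ≤ ENNReal.ofReal ((1/2:ℝ)^n) := by
        intro n
        obtain ⟨a, haO, haM⟩ := hyZ n
        have hp : (0:ℝ) < (1/2:ℝ)^n := by positivity
        have h2 : (0:ENNReal) < ENNReal.ofReal ((1/2:ℝ)^n) := ENNReal.ofReal_pos.2 hp
        obtain ⟨k, hk⟩ := ((tendstoInMeasure_iff_dist.1 haM ((1/2:ℝ)^n) hp).eventually_lt_const h2).exists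
        exact ⟨a k, haO k, hk.le⟩
      choose o hoO hoM using hpick
      refine ⟨o, hoO, ?_⟩
      rw [tendstoInMeasure_iff_dist]
      intro ε hε
      have htpow : Tendsto (fun n : ℕ => (1/2:ℝ)^n) atTop (nhds 0) :=
        tendsto_pow_atTop_nhds_zero_of_lt_one (by norm_num) (by norm_num)
      have hupper : ∀ᶠ n in atTop,
          μ {ω | ε ≤ dist (((o n : ↥X) : Ω →ₘ[μ] ℝ) ω) (((x : ↥X) : Ω →ₘ[μ] ℝ) ω)} ≤
          ENNReal.ofReal ((1/2:ℝ)^n) +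
            μ {ω | ε/2 ≤ dist (((y n : ↥X) : Ω →ₘ[μ] ℝ) ω) (((x : ↥X) : Ω →ₘ[μ] ℝ) ω)} := by
        have hev : ∀ᶠ n : ℕ in atTop, (1/2:ℝ)^n < ε/2 :=
          htpow.eventually_lt_const (by linarith)
        filter_upwards [hev] with n hn
        have hsub : {ω | ε ≤ dist (((o n : ↥X) : Ω →ₘ[μ] ℝ) ω) (((x : ↥X) : Ω →ₘ[μ] ℝ) ω)} ⊆
            {ω | ε/2 ≤ dist (((o n : ↥X) : Ω →ₘ[μ] ℝ) ω) (((y n : ↥X) : Ω →ₘ[μ] ℝ) ω)} ∪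
            {ω | ε/2 ≤ dist (((y n : ↥X) : Ω →ₘ[μ] ℝ) ω) (((x : ↥X) : Ω →ₘ[μ] ℝ) ω)} := by
          intro ω hω
          simp only [Set.mem_setOf_eq] at hω
          by_contra hc
          simp only [Set.mem_union, Set.mem_setOf_eq, not_or, not_le] at hc
          have := dist_triangle (((o n : ↥X) : Ω →ₘ[μ] ℝ) ω) (((y n : ↥X) : Ω →ₘ[μ] ℝ) ω)
            (((x : ↥X) : Ω →ₘ[μ] ℝ) ω)
          linarith [hc.1, hc.2]
        calc μ {ω | ε ≤ dist (((o n : ↥X) : Ω →ₘ[μ] ℝ) ω) (((x : ↥X) : Ω →ₘ[μ] ℝ) ω)}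
            ≤ μ ({ω | ε/2 ≤ dist (((o n : ↥X) : Ω →ₘ[μ] ℝ) ω) (((y n : ↥X) : Ω →ₘ[μ] ℝ) ω)} ∪
              {ω | ε/2 ≤ dist (((y n : ↥X) : Ω →ₘ[μ] ℝ) ω) (((x : ↥X) : Ω →ₘ[μ] ℝ) ω)}) :=
              measure_mono hsub
          _ ≤ μ {ω | ε/2 ≤ dist (((o n : ↥X) : Ω →ₘ[μ] ℝ) ω) (((y n : ↥X) : Ω →ₘ[μ] ℝ) ω)} +
              μ {ω | ε/2 ≤ dist (((y n : ↥X) : Ω →ₘ[μ] ℝ) ω) (((x : ↥X) : Ω →ₘ[μ] ℝ) ω)} :=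
              measure_union_le _ _
          _ ≤ _ := by
              refine add_le_add_left (le_trans (measure_mono ?_) (hoM n)) _
              intro ω hω
              simp only [Set.mem_setOf_eq] at hω ⊢
              linarith
      have hcomb : Tendsto (fun n : ℕ => ENNReal.ofReal ((1/2:ℝ)^n) +
          μ {ω | ε/2 ≤ dist (((y n : ↥X) : Ω →ₘ[μ] ℝ) ω) (((x : ↥X) : Ω →ₘ[μ] ℝ) ω)}) atTop
          (nhds 0) := by
        have h1 : Tendsto (fun n : ℕ => ENNReal.ofReal ((1/2:ℝ)^n)) atTop (nhds 0) := by
          have h2 := ENNReal.tendsto_ofReal (a := (0:ℝ)) htpow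
          simpa using h2
        simpa using h1.add (tendstoInMeasure_iff_dist.1 hyM (ε/2) (by linarith))
      exact tendsto_of_tendsto_of_tendsto_of_le_of_le' tendsto_const_nhds hcomb
        (Eventually.of_forall fun n => zero_le) hupper
  intro g
  obtain ⟨gn, hgnO, hgnM⟩ := hall g
  obtain ⟨ns, _, haes⟩ := hgnM.exists_seq_tendsto_ae
  exact ⟨fun k => gn (ns k), fun k => hgnO _, haes⟩


lemma part2 (X : Submodule ℝ (Ω →ₘ[μ] ℝ)) (hX : IsIdealL0 X)
    (hconst : ∀ c : ℝ, AEEqFun.const Ω (β := ℝ) c ∈ X)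
    (f : ↥X)
    (hgen : ∀ A : Set Ω, MeasurableSet A →
      ∃ B : Set Ω, MeasurableSet[MeasurableSpace.comap (⇑(f : Ω →ₘ[μ] ℝ))
        (inferInstance : MeasurableSpace ℝ)] B ∧ μ (symmDiff A B) = 0) :
    @closure _ (weakOCTopology X)
      {x : ↥X | (x : Ω →ₘ[μ] ℝ) ∈ optionSpace (f : Ω →ₘ[μ] ℝ)} = Set.univ := by
  classical
  letI tw : TopologicalSpace ↥X := weakOCTopology X
  set S : Set ↥X := {x : ↥X | (x : Ω →ₘ[μ] ℝ) ∈ optionSpace (f : Ω →ₘ[μ] ℝ)} with hSdef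
  -- continuity of order continuous functionals for the weak topology
  have hΦcont : ∀ φ : ↥X →ₗ[ℝ] ℝ, OrderContinuousOn X ⇑φ →
      Continuous[tw, inferInstance] ⇑φ := by
    intro φ hφ
    have h1 : Continuous[TopologicalSpace.induced ⇑φ inferInstance, inferInstance] ⇑φ :=
      continuous_induced_dom
    have h2 : Continuous[⨅ _ : φ ∈ {ψ : ↥X →ₗ[ℝ] ℝ | OrderContinuousOn X ⇑ψ},
        TopologicalSpace.induced ⇑φ inferInstance, inferInstance] ⇑φ :=
      continuous_iInf_dom (i := hφ) h1
    exact continuous_iInf_dom (i := φ) h2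
  -- the weak topology convergence criterion
  have hkey_tendsto : ∀ (y : ℕ → ↥X) (x : ↥X),
      (∀ φ : ↥X →ₗ[ℝ] ℝ, OrderContinuousOn X ⇑φ →
        Tendsto (fun n => φ (y n)) atTop (nhds (φ x))) →
      Tendsto y atTop (@nhds _ tw x) := by
    intro y x hconv
    have h1 : @nhds _ tw x = ⨅ φ : (↥X →ₗ[ℝ] ℝ), ⨅ _ : OrderContinuousOn X ⇑φ,
        Filter.comap ⇑φ (nhds (φ x)) := by
      have heq : tw = ⨅ φ : (↥X →ₗ[ℝ] ℝ), ⨅ _ : OrderContinuousOn X ⇑φ,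
          TopologicalSpace.induced ⇑φ inferInstance := rfl
      rw [heq, _root_.nhds_iInf]
      refine iInf_congr fun φ => ?_
      rw [_root_.nhds_iInf]
      exact iInf_congr fun hφ => nhds_induced _ _
    rw [h1]
    refine tendsto_iInf.2 fun φ => tendsto_iInf.2 fun hφ => tendsto_comap_iff.2 ?_
    exact hconv φ hφ
  -- addition is continuous
  have haddS : ∀ x y : ↥X, x ∈ @closure _ tw S → y ∈ @closure _ tw S →
      x + y ∈ @closure _ tw S := by
    intro x y hx hy
    have haddcont : Continuous[@instTopologicalSpaceProd _ _ tw tw, tw]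
        (fun p : ↥X × ↥X => p.1 + p.2) := by
      refine continuous_iInf_rng.2 fun φ => continuous_iInf_rng.2 fun hφ =>
        continuous_induced_rng.2 ?_
      have : (⇑φ ∘ fun p : ↥X × ↥X => p.1 + p.2) = fun p : ↥X × ↥X => φ p.1 + φ p.2 := by
        funext p
        simp [map_add]
      rw [this]
      exact ((hΦcont φ hφ).comp continuous_fst).add ((hΦcont φ hφ).comp continuous_snd)
    have h1 : (x, y) ∈ @closure _ (@instTopologicalSpaceProd _ _ tw tw) (S ×ˢ S) := by
      rw [closure_prod_eq]
      exact ⟨hx, hy⟩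
    have hmap : Set.MapsTo (fun p : ↥X × ↥X => p.1 + p.2) (S ×ˢ S) S := by
      rintro ⟨a, b⟩ ⟨ha, hb⟩
      show ((a + b : ↥X) : Ω →ₘ[μ] ℝ) ∈ optionSpace (f : Ω →ₘ[μ] ℝ)
      exact Submodule.add_mem _ ha hb
    exact map_mem_closure (f := fun p : ↥X × ↥X => p.1 + p.2) haddcont h1 hmap
  have hsmulS : ∀ (c : ℝ) (x : ↥X), x ∈ @closure _ tw S → c • x ∈ @closure _ tw S := by
    intro c x hx
    have hsc : Continuous[tw, tw] (fun p : ↥X => c • p) := by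
      refine continuous_iInf_rng.2 fun φ => continuous_iInf_rng.2 fun hφ =>
        continuous_induced_rng.2 ?_
      have : (⇑φ ∘ fun p : ↥X => c • p) = fun p : ↥X => c * φ p := by
        funext p
        simp [LinearMap.map_smul, smul_eq_mul]
      rw [this]
      exact continuous_const.mul (hΦcont φ hφ)
    refine map_mem_closure hsc hx (fun a ha => ?_)
    show ((c • a : ↥X) : Ω →ₘ[μ] ℝ) ∈ optionSpace (f : Ω →ₘ[μ] ℝ)
    exact Submodule.smul_mem _ c ha
  -- the dominated a.e. convergence closure property
  have hlimS : ∀ (y : ℕ → ↥X) (x : ↥X) (w : Ω →ₘ[μ] ℝ), w ∈ X →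
      (∀ n, y n ∈ @closure _ tw S) →
      (∀ n, |((y n : ↥X) : Ω →ₘ[μ] ℝ) - (x : Ω →ₘ[μ] ℝ)| ≤ w) →
      (∀ᵐ ω ∂μ, Tendsto (fun n => ((y n : ↥X) : Ω →ₘ[μ] ℝ) ω) atTop
        (nhds ((x : Ω →ₘ[μ] ℝ) ω))) →
      x ∈ @closure _ tw S := by
    intro y x w hw hyC hdom hae
    -- measurable data
    have hWm : Measurable (⇑w) := w.measurable
    set W' : Ω → ℝ := fun ω => max (w ω) 0 with hW'def
    set Zf : ℕ → Ω → ℝ := fun n ω =>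
      ⨆ m : ℕ, min |((y (n+m) : ↥X) : Ω →ₘ[μ] ℝ) ω - ((x : ↥X) : Ω →ₘ[μ] ℝ) ω| (W' ω)
      with hZfdef
    have hZmeas : ∀ n, Measurable (Zf n) := by
      intro n
      refine Measurable.iSup fun m => Measurable.min ?_ (hWm.max measurable_const)
      exact (((y (n+m) : ↥X) : Ω →ₘ[μ] ℝ).measurable.sub
        ((x : ↥X) : Ω →ₘ[μ] ℝ).measurable).abs
    have hBdd : ∀ n ω, BddAbove (Set.range fun m : ℕ =>
        min |((y (n+m) : ↥X) : Ω →ₘ[μ] ℝ) ω - ((x : ↥X) : Ω →ₘ[μ] ℝ) ω| (W' ω)) := by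
      intro n ω
      refine ⟨W' ω, ?_⟩
      rintro r ⟨m, rfl⟩
      exact min_le_right _ _
    have hZ0 : ∀ n ω, 0 ≤ Zf n ω := fun n ω =>
      le_trans (le_min (abs_nonneg _) (le_max_right _ _)) (le_ciSup (hBdd n ω) 0)
    have hZub : ∀ n ω, Zf n ω ≤ W' ω := fun n ω => ciSup_le fun m => min_le_right _ _
    have hZanti : ∀ (ω : Ω) {n n' : ℕ}, n ≤ n' → Zf n' ω ≤ Zf n ω := by
      intro ω n n' h
      refine ciSup_le fun m => ?_
      have e : n' + m = n + (m + (n' - n)) := by omega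
      calc min |((y (n'+m) : ↥X) : Ω →ₘ[μ] ℝ) ω - ((x : ↥X) : Ω →ₘ[μ] ℝ) ω| (W' ω)
          = min |((y (n + (m + (n' - n))) : ↥X) : Ω →ₘ[μ] ℝ) ω -
            ((x : ↥X) : Ω →ₘ[μ] ℝ) ω| (W' ω) := by rw [← e]
        _ ≤ Zf n ω := le_ciSup (hBdd n ω) (m + (n' - n))
    set z : ULift.{u} ℕ → (Ω →ₘ[μ] ℝ) := fun a =>
      AEEqFun.mk (Zf a.down) (hZmeas a.down).aestronglyMeasurable with hzdef
    have hwsupX : w ⊔ 0 ∈ X := by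
      refine memX_of_bound hX hw ?_
      filter_upwards [AEEqFun.coeFn_sup w 0,
        AEEqFun.coeFn_zero (β := ℝ) (α := Ω) (μ := μ)] with ω e1 e3
      rw [e1, e3]
      simp only [Pi.zero_apply]
      rw [abs_of_nonneg (le_max_right _ _)]
      exact max_le (le_abs_self _) (abs_nonneg _)
    have hwsup_coe : ∀ᵐ ω ∂μ, (w ⊔ 0 : Ω →ₘ[μ] ℝ) ω = W' ω := by
      filter_upwards [AEEqFun.coeFn_sup w 0,
        AEEqFun.coeFn_zero (β := ℝ) (α := Ω) (μ := μ)] with ω e1 e3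
      rw [e1, e3]
      simp [hW'def]
    have hzX : ∀ a, z a ∈ X := by
      intro a
      refine memX_of_bound hX hwsupX ?_
      filter_upwards [AEEqFun.coeFn_mk (Zf a.down) (hZmeas a.down).aestronglyMeasurable,
        hwsup_coe] with ω e1 e2
      rw [e1, e2, abs_of_nonneg (hZ0 a.down ω), abs_of_nonneg (le_max_right (w ω) 0)]
      exact hZub a.down ω
    have hdom_ae : ∀ n, ∀ᵐ ω ∂μ,
        |((y n : ↥X) : Ω →ₘ[μ] ℝ) ω - ((x : ↥X) : Ω →ₘ[μ] ℝ) ω| ≤ w ω := by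
      intro n
      filter_upwards [le_aeq (hdom n), abs_aeq (((y n : ↥X) : Ω →ₘ[μ] ℝ) - (x : Ω →ₘ[μ] ℝ)),
        AEEqFun.coeFn_sub ((y n : ↥X) : Ω →ₘ[μ] ℝ) ((x : ↥X) : Ω →ₘ[μ] ℝ)] with ω e1 e2 e3
      rw [e2, e3] at e1
      exact e1
    -- order convergence of (y n - x) to 0
    have hocn : OrderConvNetIn X
        (fun a : ULift.{u} ℕ => (((y a.down - x : ↥X)) : Ω →ₘ[μ] ℝ)) 0 := by
      refine ⟨z, hzX, ?_, ?_, ?_, ?_⟩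
      · -- antitone
        intro a b hab
        refine aeq_le ?_
        filter_upwards [AEEqFun.coeFn_mk (Zf a.down) (hZmeas a.down).aestronglyMeasurable,
          AEEqFun.coeFn_mk (Zf b.down) (hZmeas b.down).aestronglyMeasurable] with ω e1 e2
        rw [show z b ω = Zf b.down ω from e2, show z a ω = Zf a.down ω from e1]
        exact hZanti ω (show a.down ≤ b.down from hab)
      · -- nonneg
        intro a
        refine aeq_le ?_
        filter_upwards [AEEqFun.coeFn_mk (Zf a.down) (hZmeas a.down).aestronglyMeasurable,
          AEEqFun.coeFn_zero (β := ℝ) (α := Ω) (μ := μ)] with ω e1 e2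
        rw [show ((0 : Ω →ₘ[μ] ℝ)) ω = 0 from by rw [e2]; rfl,
          show z a ω = Zf a.down ω from e1]
        exact hZ0 a.down ω
      · -- infimum is 0
        intro h hhX hle
        have hle' : ∀ n : ℕ, ∀ᵐ ω ∂μ, h ω ≤ Zf n ω := by
          intro n
          filter_upwards [le_aeq (hle (ULift.up n)),
            AEEqFun.coeFn_mk (Zf n) (hZmeas n).aestronglyMeasurable] with ω e1 e2
          rw [e2] at e1
          exact e1
        refine aeq_le ?_
        filter_upwards [ae_all_iff.2 hle', hae,
          AEEqFun.coeFn_zero (β := ℝ) (α := Ω) (μ := μ)] with ω h1 h2 e0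
        rw [show ((0 : Ω →ₘ[μ] ℝ)) ω = 0 from by rw [e0]; rfl]
        by_contra hlt
        push_neg at hlt
        obtain ⟨N, hN⟩ := (Metric.tendsto_atTop.1 h2 (h ω / 2) (by linarith))
        have hZN : Zf N ω ≤ h ω / 2 := by
          refine ciSup_le fun m => ?_
          refine le_trans (min_le_left _ _) ?_
          have := hN (N + m) (Nat.le_add_right N m)
          rw [Real.dist_eq] at this
          exact this.le
        linarith [h1 N]
      · -- eventual domination
        refine Eventually.of_forall fun a => ?_
        show |((y a.down - x : ↥X) : Ω →ₘ[μ] ℝ) - 0| ≤ z a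
        rw [sub_zero]
        have hcoe : ((y a.down - x : ↥X) : Ω →ₘ[μ] ℝ) =
            ((y a.down : ↥X) : Ω →ₘ[μ] ℝ) - ((x : ↥X) : Ω →ₘ[μ] ℝ) := rfl
        rw [hcoe]
        refine abs_sub_le_aeq ?_
        filter_upwards [hdom_ae a.down,
          AEEqFun.coeFn_mk (Zf a.down) (hZmeas a.down).aestronglyMeasurable] with ω e1 e2
        rw [show z a ω = Zf a.down ω from e2]
        have hterm : |((y (a.down + 0) : ↥X) : Ω →ₘ[μ] ℝ) ω - ((x : ↥X) : Ω →ₘ[μ] ℝ) ω|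
            ≤ Zf a.down ω := by
          refine le_trans (le_of_eq ?_) (le_ciSup (hBdd a.down ω) 0)
          rw [min_eq_left]
          simp only [Nat.add_zero]
          exact le_trans e1 (le_max_left _ _)
        simpa using hterm
    -- weak convergence
    have hconv : ∀ φ : ↥X →ₗ[ℝ] ℝ, OrderContinuousOn X ⇑φ →
        Tendsto (fun n => φ (y n)) atTop (nhds (φ x)) := by
      intro φ hφ
      haveI hIsDir : IsDirected (ULift.{u} ℕ) (· ≤ ·) :=
        ⟨fun a b => ⟨ULift.up (max a.down b.down),
          (le_max_left a.down b.down : a.down ≤ max a.down b.down),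
          (le_max_right a.down b.down : b.down ≤ max a.down b.down)⟩⟩
      have hoc := hφ (ULift.{u} ℕ) inferInstance hIsDir ⟨ULift.up 0⟩
        (fun a => y a.down - x) hocn
      have hup : Tendsto (fun n : ℕ => (ULift.up n : ULift.{u} ℕ)) atTop atTop := by
        refine Filter.tendsto_atTop_atTop.2 fun b => ⟨b.down, fun a hba => hba⟩
      have hcomp := hoc.comp hup
      have heq : ((fun a : ULift.{u} ℕ => φ (y a.down - x)) ∘ fun n : ℕ => ULift.up n) =
          fun n : ℕ => φ (y n) - φ x := by
        funext n
        simp [map_sub]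
      rw [heq] at hcomp
      exact tendsto_sub_nhds_zero_iff.1 hcomp
    have htend : Tendsto y atTop (@nhds _ tw x) := hkey_tendsto y x hconv
    have hmem : x ∈ closure (closure S) :=
      mem_closure_of_tendsto htend (Eventually.of_forall hyC)
    rwa [closure_closure] at hmem
  -- conclude via the master induction
  refine Set.eq_univ_of_forall ?_
  intro x
  exact master X hX hconst f hgen (closure S)
    (fun x hx => subset_closure hx) haddS hsmulS hlimS x

end Master

/-- Corollary 3.2: If `σ(f) = Σ` (up to null sets), then the options on `f`
complete the market: every `g ∈ X` is an a.e. limit of portfolios of options on `f`, and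
`O_f` is `σ(X, Xₙ~)`-dense in `X`. -/
theorem options_complete_market
    {m0 : MeasurableSpace Ω} {μ : Measure Ω} [IsProbabilityMeasure μ]
    (X : Submodule ℝ (Ω →ₘ[μ] ℝ)) (hX : IsIdealL0 X)
    (hconst : ∀ c : ℝ, AEEqFun.const Ω (β := ℝ) c ∈ X)
    (hφ : ∃ φ : ↥X →ₗ[ℝ] ℝ, OrderContinuousOn X ⇑φ ∧ StrictlyPositiveOn X ⇑φ)
    (f : ↥X) (hf : 0 ≤ (f : Ω →ₘ[μ] ℝ))
    (hgen : ∀ A : Set Ω, MeasurableSet A →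
      ∃ B : Set Ω, MeasurableSet[MeasurableSpace.comap (⇑(f : Ω →ₘ[μ] ℝ))
        (inferInstance : MeasurableSpace ℝ)] B ∧ μ (symmDiff A B) = 0) :
    (∀ g : ↥X, ∃ gn : ℕ → ↥X,
      (∀ n, (gn n : Ω →ₘ[μ] ℝ) ∈ optionSpace (f : Ω →ₘ[μ] ℝ)) ∧
      ∀ᵐ ω ∂μ, Tendsto (fun n => (gn n : Ω →ₘ[μ] ℝ) ω) atTop
        (nhds ((g : Ω →ₘ[μ] ℝ) ω))) ∧
    @closure _ (weakOCTopology X)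
      {x : ↥X | (x : Ω →ₘ[μ] ℝ) ∈ optionSpace (f : Ω →ₘ[μ] ℝ)} = Set.univ := by
  exact ⟨part1 X hX hconst f hgen, part2 X hX hconst f hgen⟩
end

section
/- For 1 ≤ p < ∞, the option space O_f of a nonnegative f ∈ L^p(Ω, Σ, ℙ) satisfies: the L^p-norm closure of O_f equals L⁰(σ(f)) ∩ L^p(Σ); i.e., g ∈ L^p is σ(f)-measurable iff it is a norm limit of portfolios of options on f. -/
open MeasureTheory Filter
open scoped ENNReal Topology

variable {Ω : Type*}

lemma auxCoeFnFinsetSum {m0 : MeasurableSpace Ω} {μ : Measure Ω} {p : ENNReal}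
    (s : Finset ℕ) (h : ℕ → Lp ℝ p μ) :
    ⇑(∑ i ∈ s, h i) =ᵐ[μ] fun ω => ∑ i ∈ s, h i ω := by
  classical
  induction s using Finset.induction with
  | empty => simp only [Finset.sum_empty]; exact Lp.coeFn_zero ℝ p μ
  | insert _ _ hnotmem ih =>
    rename_i a s
    rw [Finset.sum_insert hnotmem]
    filter_upwards [Lp.coeFn_add (h a) (∑ i ∈ s, h i), ih] with ω h1 h2
    simp only [h1, Pi.add_apply, h2, Finset.sum_insert hnotmem]

lemma auxTendstoLp {m0 : MeasurableSpace Ω} {μ : Measure Ω} [IsFiniteMeasure μ]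
    {p : ENNReal} (hp1 : 1 ≤ p) (hp : p ≠ ⊤) {F : ℕ → Ω → ℝ} {G : Ω → ℝ}
    (hF : ∀ n, StronglyMeasurable (F n)) (hG : MemLp G p μ)
    (hbound : ∀ n, ∀ᵐ ω ∂μ, ‖F n ω‖ ≤ 1)
    (hlim : ∀ᵐ ω ∂μ, Tendsto (fun n => F n ω) atTop (𝓝 (G ω))) :
    Tendsto (fun n => eLpNorm (F n - G) p μ) atTop (𝓝 0) := by
  refine tendsto_Lp_finite_of_tendsto_ae hp1 hp (fun n => (hF n).aestronglyMeasurable) hG ?_ hlim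
  refine unifIntegrable_of' hp1 hp hF fun ε hε => ⟨2, two_pos, fun i => ?_⟩
  have h0 : {x | (2 : NNReal) ≤ ‖F i x‖₊}.indicator (F i) =ᵐ[μ] 0 := by
    filter_upwards [hbound i] with ω hω
    simp only [Set.indicator_apply, Set.mem_setOf_eq, Pi.zero_apply]
    rw [if_neg]
    intro hcon
    have : (2 : ℝ) ≤ ‖F i ω‖ := by exact_mod_cast hcon
    linarith
  rw [eLpNorm_congr_ae h0, eLpNorm_zero]
  exact zero_le

lemma auxClamp {x a δ : ℝ} (hδ : 0 < δ) :
    0 ≤ (x - a) ⊔ 0 - (x - (a + δ)) ⊔ 0 ∧ (x - a) ⊔ 0 - (x - (a + δ)) ⊔ 0 ≤ δ := by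
  have h1 : x - (a + δ) ≤ (x - (a + δ)) ⊔ 0 := le_sup_left
  have h2 : (0 : ℝ) ≤ (x - (a + δ)) ⊔ 0 := le_sup_right
  have h3 : (x - a) ⊔ 0 ≤ (x - (a + δ)) ⊔ 0 + δ := sup_le (by linarith) (by linarith)
  have h4 : (x - (a + δ)) ⊔ 0 ≤ (x - a) ⊔ 0 := sup_le_sup_right (by linarith) 0
  exact ⟨by linarith, by linarith⟩

/-- The constant function `1` as an element of `L^p` over a finite measure. -/
noncomputable def oneLp {m0 : MeasurableSpace Ω} {μ : Measure Ω} [IsFiniteMeasure μ]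
    (p : ENNReal) : Lp ℝ p μ :=
  (memLp_const (1 : ℝ)).toLp fun _ => (1 : ℝ)

/-- The option space `O_f = span{1, (f-k)⁺ : k ∈ ℝ}` inside `L^p`. -/
noncomputable def optionSpaceLp {m0 : MeasurableSpace Ω} {μ : Measure Ω}
    [IsFiniteMeasure μ] {p : ENNReal} [Fact (1 ≤ p)] (f : Lp ℝ p μ) :
    Submodule ℝ (Lp ℝ p μ) :=
  Submodule.span ℝ ({oneLp p} ∪ {g | ∃ k : ℝ, g = (f - k • oneLp p) ⊔ 0})

set_option maxHeartbeats 2000000 in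
set_option synthInstance.maxHeartbeats 400000 in
/-- For `1 ≤ p < ∞` and `0 ≤ f ∈ L^p` over a probability space, the
`L^p`-norm closure of the option space `O_f` is exactly the set of `σ(f)`-measurable
elements of `L^p`. -/
theorem lp_norm_closure_optionSpace
    {m0 : MeasurableSpace Ω} {μ : Measure Ω} [IsProbabilityMeasure μ]
    (p : ENNReal) [Fact (1 ≤ p)] (hp : p ≠ ⊤)
    (f : Lp ℝ p μ) (hf : 0 ≤ f) :
    closure (optionSpaceLp f : Set (Lp ℝ p μ)) =
      {g : Lp ℝ p μ | ∃ g' : Ω → ℝ,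
        Measurable[MeasurableSpace.comap (⇑f) (inferInstance : MeasurableSpace ℝ)] g' ∧
        ⇑g =ᵐ[μ] g'} := by
  classical
  have hp1 : (1 : ENNReal) ≤ p := Fact.out
  have hfmeas : Measurable[m0] (⇑f) := (Lp.stronglyMeasurable f).measurable
  set m : MeasurableSpace Ω := MeasurableSpace.comap (⇑f) (inferInstance : MeasurableSpace ℝ)
    with hm_def
  have hm : m ≤ m0 := by rw [hm_def]; exact measurable_iff_comap_le.1 hfmeas
  have hfm : Measurable[m] (⇑f) := by rw [hm_def]; exact measurable_iff_comap_le.2 le_rfl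
  have hone : ⇑(oneLp (μ := μ) p) =ᵐ[μ] fun _ => (1 : ℝ) := MemLp.coeFn_toLp _
  apply Set.Subset.antisymm
  · -- easy inclusion: closure ⊆ σ(f)-measurable elements
    have hclosed : IsClosed {g : Lp ℝ p μ | AEStronglyMeasurable[m] (⇑g) μ} :=
      (isComplete_aestronglyMeasurable hm).isClosed
    have hsub : (optionSpaceLp f : Set (Lp ℝ p μ)) ⊆
        {g : Lp ℝ p μ | AEStronglyMeasurable[m] (⇑g) μ} := by
      intro g hg
      have hle : optionSpaceLp f ≤ @lpMeas Ω ℝ ℝ _ _ _ m m0 p μ := by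
        rw [optionSpaceLp, Submodule.span_le]
        rintro x (hx | ⟨k, rfl⟩)
        · rw [Set.mem_singleton_iff] at hx
          subst hx
          rw [SetLike.mem_coe, mem_lpMeas_iff_aestronglyMeasurable]
          exact ⟨fun _ => (1 : ℝ), stronglyMeasurable_const, hone⟩
        · rw [SetLike.mem_coe, mem_lpMeas_iff_aestronglyMeasurable]
          refine ⟨fun ω => (f ω - k) ⊔ 0, ?_, ?_⟩
          · exact Measurable.stronglyMeasurable ((hfm.sub measurable_const).max measurable_const)
          · filter_upwards [Lp.coeFn_sup (f - k • oneLp p) 0,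
              Lp.coeFn_sub f (k • oneLp p), Lp.coeFn_smul k (oneLp (μ := μ) p),
              Lp.coeFn_zero ℝ p μ, hone] with ω e1 e2 e3 e4 e5
            simp only [Pi.sup_apply, Pi.sub_apply, Pi.smul_apply, Pi.zero_apply, smul_eq_mul]
              at e1 e2 e3 e4 e5 ⊢
            simp only [e1, e2, e3, e4, e5, mul_one]
      have := hle hg
      rw [mem_lpMeas_iff_aestronglyMeasurable] at this
      exact this
    intro g hg
    obtain ⟨g', hg'm, hgg'⟩ := closure_minimal hsub hclosed hg
    exact ⟨g', hg'm.measurable, hgg'⟩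
  · -- hard inclusion
    rintro g ⟨g', hg'meas, hgg'⟩
    set S := (optionSpaceLp f).topologicalClosure with hS_def
    have hSclosed : IsClosed (S : Set (Lp ℝ p μ)) := Submodule.isClosed_topologicalClosure _
    have h_one_mem : oneLp p ∈ S :=
      Submodule.le_topologicalClosure _ (Submodule.subset_span (Or.inl rfl))
    have h_call : ∀ k : ℝ, (f - k • oneLp p) ⊔ 0 ∈ S := fun k =>
      Submodule.le_topologicalClosure _ (Submodule.subset_span (Or.inr ⟨k, rfl⟩))
    -- key closure lemma
    have key : ∀ (F : ℕ → Ω → ℝ) (G : Ω → ℝ) (hG : MemLp G p μ),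
        (∀ n, StronglyMeasurable[m0] (F n)) → (∀ n, ∀ᵐ ω ∂μ, ‖F n ω‖ ≤ 1) →
        (∀ᵐ ω ∂μ, Tendsto (fun n => F n ω) atTop (𝓝 (G ω))) →
        (∀ n, ∃ h ∈ S, ⇑h =ᵐ[μ] F n) → hG.toLp G ∈ S := by
      intro F G hG hFm hFb hFlim hFS
      choose h hhS hhae using hFS
      have htend : Tendsto h atTop (𝓝 (hG.toLp G)) := by
        rw [Lp.tendsto_Lp_iff_tendsto_eLpNorm]
        have heq : ∀ n, eLpNorm (⇑(h n) - G) p μ = eLpNorm (F n - G) p μ := fun n =>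
          eLpNorm_congr_ae ((hhae n).sub EventuallyEq.rfl)
        simp only [heq]
        exact auxTendstoLp hp1 hp hFm hG hFb hFlim
      exact hSclosed.mem_of_tendsto htend (Eventually.of_forall hhS)
    -- indicators of preimages of Borel sets
    have hgen : (inferInstance : MeasurableSpace ℝ) =
        MeasurableSpace.generateFrom (Set.range Set.Ioi) := by
      rw [BorelSpace.measurable_eq (α := ℝ)]
      exact borel_eq_generateFrom_Ioi ℝ
    have h_empty : ∃ h ∈ S, ⇑h =ᵐ[μ] (⇑f ⁻¹' (∅ : Set ℝ)).indicator (fun _ => (1 : ℝ)) :=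
      ⟨0, Submodule.zero_mem S, by
        filter_upwards [Lp.coeFn_zero ℝ p μ] with ω e
        simp [e]⟩
    have h_basic : ∀ t ∈ Set.range (Set.Ioi (α := ℝ)),
        ∃ h ∈ S, ⇑h =ᵐ[μ] (⇑f ⁻¹' t).indicator (fun _ => (1 : ℝ)) := by
      rintro t ⟨a, rfl⟩
      set F : ℕ → Ω → ℝ := fun n ω =>
        ((n : ℝ) + 1) * ((f ω - a) ⊔ 0 - (f ω - (a + 1 / ((n : ℝ) + 1))) ⊔ 0) with hF_def
      set G : Ω → ℝ := (⇑f ⁻¹' Set.Ioi a).indicator (fun _ => (1 : ℝ)) with hG_def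
      have hG : MemLp G p μ :=
        memLp_indicator_const p (hfmeas measurableSet_Ioi) 1 (Or.inr (measure_ne_top μ _))
      have hδ : ∀ n : ℕ, (0 : ℝ) < 1 / ((n : ℝ) + 1) := fun n => by positivity
      have hFm : ∀ n, StronglyMeasurable[m0] (F n) := by
        intro n
        apply Measurable.stronglyMeasurable
        exact measurable_const.mul
          (((hfmeas.sub measurable_const).max measurable_const).sub
            ((hfmeas.sub measurable_const).max measurable_const))
      have hFb : ∀ n, ∀ᵐ ω ∂μ, ‖F n ω‖ ≤ 1 := by
        intro n
        filter_upwards with ω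
        obtain ⟨hd0, hdδ⟩ := auxClamp (x := f ω) (a := a) (hδ n)
        have hn1 : (0 : ℝ) < (n : ℝ) + 1 := by positivity
        simp only [hF_def]
        rw [Real.norm_eq_abs, abs_of_nonneg (mul_nonneg hn1.le hd0)]
        calc ((n : ℝ) + 1) * ((f ω - a) ⊔ 0 - (f ω - (a + 1 / ((n : ℝ) + 1))) ⊔ 0)
            ≤ ((n : ℝ) + 1) * (1 / ((n : ℝ) + 1)) := mul_le_mul_of_nonneg_left hdδ hn1.le
          _ = 1 := by field_simp
      have hFlim : ∀ᵐ ω ∂μ, Tendsto (fun n => F n ω) atTop (𝓝 (G ω)) := by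
        filter_upwards with ω
        rcases lt_or_ge a (f ω) with hx | hx
        · have hGω : G ω = 1 := by
            rw [hG_def]
            exact Set.indicator_of_mem (Set.mem_preimage.2 hx) _
          rw [hGω]
          obtain ⟨N, hN⟩ := exists_nat_one_div_lt (sub_pos.2 hx)
          apply Tendsto.congr' _ tendsto_const_nhds
          rw [EventuallyEq, eventually_atTop]
          refine ⟨N, fun n hn => ?_⟩
          have hle : 1 / ((n : ℝ) + 1) ≤ 1 / ((N : ℝ) + 1) := by
            apply one_div_le_one_div_of_le (by positivity)
            exact_mod_cast add_le_add_left (Nat.cast_le.2 hn) 1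
          have h1 : (0 : ℝ) ≤ f ω - (a + 1 / ((n : ℝ) + 1)) := by
            have := hle.trans_lt hN
            linarith
          have e1 : (f ω - a) ⊔ 0 = f ω - a := sup_eq_left.2 (by linarith)
          have e2 : (f ω - (a + 1 / ((n : ℝ) + 1))) ⊔ 0 = f ω - (a + 1 / ((n : ℝ) + 1)) :=
            sup_eq_left.2 h1
          have hn1 : ((n : ℝ) + 1) ≠ 0 := by positivity
          simp only [hF_def, e1, e2]
          field_simp
          ring
        · have hGω : G ω = 0 := by
            rw [hG_def]
            exact Set.indicator_of_notMem (by simpa using hx) _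
          rw [hGω]
          have hz : ∀ n : ℕ, F n ω = 0 := by
            intro n
            have e1 : (f ω - a) ⊔ 0 = 0 := sup_eq_right.2 (by linarith)
            have e2 : (f ω - (a + 1 / ((n : ℝ) + 1))) ⊔ 0 = 0 :=
              sup_eq_right.2 (by linarith [hδ n])
            simp only [hF_def, e1, e2, sub_zero, mul_zero]
          simpa only [hz] using tendsto_const_nhds
      have hFS : ∀ n, ∃ h ∈ S, ⇑h =ᵐ[μ] F n := by
        intro n
        refine ⟨((n : ℝ) + 1) • ((f - a • oneLp p) ⊔ 0 -
          (f - (a + 1 / ((n : ℝ) + 1)) • oneLp p) ⊔ 0),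
          S.smul_mem _ (S.sub_mem (h_call a) (h_call _)), ?_⟩
        filter_upwards [Lp.coeFn_smul ((n : ℝ) + 1) ((f - a • oneLp p) ⊔ 0 -
            (f - (a + 1 / ((n : ℝ) + 1)) • oneLp p) ⊔ 0),
          Lp.coeFn_sub ((f - a • oneLp p) ⊔ 0) ((f - (a + 1 / ((n : ℝ) + 1)) • oneLp p) ⊔ 0),
          Lp.coeFn_sup (f - a • oneLp p) 0,
          Lp.coeFn_sup (f - (a + 1 / ((n : ℝ) + 1)) • oneLp p) 0,
          Lp.coeFn_sub f (a • oneLp p),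
          Lp.coeFn_sub f ((a + 1 / ((n : ℝ) + 1)) • oneLp p),
          Lp.coeFn_smul a (oneLp (μ := μ) p),
          Lp.coeFn_smul (a + 1 / ((n : ℝ) + 1)) (oneLp (μ := μ) p),
          Lp.coeFn_zero ℝ p μ, hone] with ω e1 e2 e3 e4 e5 e6 e7 e8 e9 e10
        simp only [Pi.smul_apply, Pi.sub_apply, Pi.sup_apply, Pi.zero_apply, smul_eq_mul]
          at e1 e2 e3 e4 e5 e6 e7 e8 e9 e10 ⊢
        simp only [hF_def, e1, e2, e3, e4, e5, e6, e7, e8, e9, e10, mul_one]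
      refine ⟨hG.toLp G, key F G hG hFm hFb hFlim hFS, ?_⟩
      filter_upwards [MemLp.coeFn_toLp hG] with ω e
      rw [e]
    have h_compl : ∀ t : Set ℝ, MeasurableSet t →
        (∃ h ∈ S, ⇑h =ᵐ[μ] (⇑f ⁻¹' t).indicator (fun _ => (1 : ℝ))) →
        ∃ h ∈ S, ⇑h =ᵐ[μ] (⇑f ⁻¹' tᶜ).indicator (fun _ => (1 : ℝ)) := by
      rintro t htmeas ⟨h, hhS, hhae⟩
      refine ⟨oneLp p - h, S.sub_mem h_one_mem hhS, ?_⟩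
      filter_upwards [Lp.coeFn_sub (oneLp (μ := μ) p) h, hone, hhae] with ω e1 e2 e3
      simp only [Pi.sub_apply] at e1 ⊢
      rw [e1]
      simp only [e2, e3]
      by_cases hω : f ω ∈ t <;>
        simp [Set.indicator_apply, hω]
    have h_union : ∀ t : ℕ → Set ℝ, Pairwise (Function.onFun Disjoint t) →
        (∀ i, MeasurableSet (t i)) →
        (∀ i, ∃ h ∈ S, ⇑h =ᵐ[μ] (⇑f ⁻¹' t i).indicator (fun _ => (1 : ℝ))) →
        ∃ h ∈ S, ⇑h =ᵐ[μ] (⇑f ⁻¹' ⋃ i, t i).indicator (fun _ => (1 : ℝ)) := by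
      rintro t htdisj htmeas htP
      choose h hhS hhae using htP
      set F : ℕ → Ω → ℝ := fun n ω =>
        ∑ i ∈ Finset.range n, (⇑f ⁻¹' t i).indicator (fun _ => (1 : ℝ)) ω with hF_def
      set G : Ω → ℝ := (⇑f ⁻¹' ⋃ i, t i).indicator (fun _ => (1 : ℝ)) with hG_def
      have hG : MemLp G p μ :=
        memLp_indicator_const p (hfmeas (MeasurableSet.iUnion htmeas)) 1
          (Or.inr (measure_ne_top μ _))
      have hFm : ∀ n, StronglyMeasurable[m0] (F n) := by
        intro n
        apply Measurable.stronglyMeasurable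
        apply Finset.measurable_sum
        intro i _
        exact measurable_const.indicator (hfmeas (htmeas i))
      have hFval : ∀ n ω, F n ω = if ∃ i ∈ Finset.range n, f ω ∈ t i then 1 else 0 := by
        intro n ω
        simp only [hF_def]
        by_cases hex : ∃ i ∈ Finset.range n, f ω ∈ t i
        · obtain ⟨j, hjn, hjmem⟩ := hex
          rw [if_pos ⟨j, hjn, hjmem⟩]
          have huniq : ∀ i ∈ Finset.range n, i ≠ j →
              (⇑f ⁻¹' t i).indicator (fun _ => (1 : ℝ)) ω = 0 := by
            intro i _ hij
            apply Set.indicator_of_notMem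
            intro hmem
            exact Set.disjoint_left.1 (htdisj hij) hmem hjmem
          rw [Finset.sum_eq_single_of_mem j hjn huniq]
          exact Set.indicator_of_mem (Set.mem_preimage.2 hjmem) _
        · rw [if_neg hex]
          apply Finset.sum_eq_zero
          intro i hi
          apply Set.indicator_of_notMem
          exact fun hmem => hex ⟨i, hi, hmem⟩
      have hFb : ∀ n, ∀ᵐ ω ∂μ, ‖F n ω‖ ≤ 1 := by
        intro n
        filter_upwards with ω
        rw [hFval n ω]
        split <;> simp
      have hFlim : ∀ᵐ ω ∂μ, Tendsto (fun n => F n ω) atTop (𝓝 (G ω)) := by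
        filter_upwards with ω
        by_cases hω : f ω ∈ ⋃ i, t i
        · obtain ⟨j, hj⟩ := Set.mem_iUnion.1 hω
          have hGω : G ω = 1 := by
            rw [hG_def]; exact Set.indicator_of_mem (Set.mem_preimage.2 hω) _
          rw [hGω]
          apply Tendsto.congr' _ tendsto_const_nhds
          rw [EventuallyEq, eventually_atTop]
          exact ⟨j + 1, fun n hn => by
            rw [hFval n ω, if_pos ⟨j, Finset.mem_range.2 hn, hj⟩]⟩
        · have hGω : G ω = 0 := by
            rw [hG_def]; exact Set.indicator_of_notMem (fun hc => hω (Set.mem_preimage.1 hc)) _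
          rw [hGω]
          have hz : ∀ n, F n ω = 0 := by
            intro n
            rw [hFval n ω, if_neg]
            rintro ⟨i, -, hmem⟩
            exact hω (Set.mem_iUnion.2 ⟨i, hmem⟩)
          simpa only [hz] using tendsto_const_nhds
      have hFS : ∀ n, ∃ hh ∈ S, ⇑hh =ᵐ[μ] F n := by
        intro n
        refine ⟨∑ i ∈ Finset.range n, h i,
          Submodule.sum_mem S fun i _ => hhS i, ?_⟩
        filter_upwards [auxCoeFnFinsetSum (Finset.range n) h, ae_all_iff.2 hhae] with ω e1 e2
        rw [e1]
        simp only [hF_def]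
        exact Finset.sum_congr rfl fun i _ => e2 i
      refine ⟨hG.toLp G, key F G hG hFm hFb hFlim hFS, ?_⟩
      filter_upwards [MemLp.coeFn_toLp hG] with ω e
      rw [e]
    have hP : ∀ t : Set ℝ, MeasurableSet t →
        ∃ h ∈ S, ⇑h =ᵐ[μ] (⇑f ⁻¹' t).indicator (fun _ => (1 : ℝ)) := by
      intro t ht
      exact MeasurableSpace.induction_on_inter hgen isPiSystem_Ioi h_empty h_basic
        h_compl h_union t ht
    -- indicators of m-measurable sets
    have hPm : ∀ A : Set Ω, MeasurableSet[m] A →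
        ∃ h ∈ S, ⇑h =ᵐ[μ] A.indicator (fun _ => (1 : ℝ)) := by
      intro A hA
      rw [hm_def] at hA
      obtain ⟨t, ht, rfl⟩ := hA
      exact hP t ht
    -- simple functions
    have hPs : ∀ s : @SimpleFunc Ω m ℝ, ∃ h ∈ S, ⇑h =ᵐ[μ] ⇑s := by
      intro s
      refine @SimpleFunc.induction Ω ℝ m _ (fun s => ∃ h ∈ S, ⇑h =ᵐ[μ] ⇑s) ?_ ?_ s
      · intro c A hA
        obtain ⟨h, hhS, hhae⟩ := hPm A hA
        refine ⟨c • h, S.smul_mem c hhS, ?_⟩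
        filter_upwards [Lp.coeFn_smul c h, hhae] with ω e1 e2
        simp only [Pi.smul_apply, smul_eq_mul] at e1
        rw [e1, e2]
        by_cases hω : ω ∈ A <;>
          simp [Set.indicator_apply, hω, SimpleFunc.piecewise_apply]
      · rintro s₁ s₂ - ⟨h₁, h₁S, h₁ae⟩ ⟨h₂, h₂S, h₂ae⟩
        refine ⟨h₁ + h₂, S.add_mem h₁S h₂S, ?_⟩
        filter_upwards [Lp.coeFn_add h₁ h₂, h₁ae, h₂ae] with ω e1 e2 e3
        rw [e1, Pi.add_apply, e2, e3]
        simp [SimpleFunc.coe_add]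
    -- conclude
    have hg'sm : StronglyMeasurable[m] g' := hg'meas.stronglyMeasurable
    have hgme : MemLp g' p μ := (Lp.memLp g).ae_eq hgg'
    have htrim : MemLp g' p (μ.trim hm) :=
      ⟨hg'sm.aestronglyMeasurable, by rw [eLpNorm_trim hm hg'sm]; exact hgme.2⟩
    rw [show closure (optionSpaceLp f : Set (Lp ℝ p μ)) = (S : Set (Lp ℝ p μ)) from
      (Submodule.topologicalClosure_coe _).symm]
    have hmem : ∀ ε : ℝ, 0 < ε → ∃ h ∈ (S : Set (Lp ℝ p μ)), dist g h < ε := by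
      intro ε hε
      obtain ⟨s, hs, -⟩ := htrim.exists_simpleFunc_eLpNorm_sub_lt hp
        (ENNReal.ofReal_pos.2 hε).ne'
      obtain ⟨h, hhS, hhae⟩ := hPs s
      refine ⟨h, hhS, ?_⟩
      rw [Lp.dist_def]
      have e1 : eLpNorm (⇑g - ⇑h) p μ = eLpNorm (g' - ⇑s) p μ :=
        eLpNorm_congr_ae (hgg'.sub hhae)
      have e2 : eLpNorm (g' - ⇑s) p (μ.trim hm) = eLpNorm (g' - ⇑s) p μ :=
        eLpNorm_trim hm (hg'sm.sub s.stronglyMeasurable)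
      rw [e1, ← e2]
      calc (eLpNorm (g' - ⇑s) p (μ.trim hm)).toReal
          < (ENNReal.ofReal ε).toReal :=
            (ENNReal.toReal_lt_toReal (hs.trans_le le_top).ne ENNReal.ofReal_ne_top).2 hs
        _ = ε := ENNReal.toReal_ofReal hε.le
    have hcl : g ∈ closure (S : Set (Lp ℝ p μ)) :=
      Metric.mem_closure_iff.2 hmem
    rwa [hSclosed.closure_eq] at hcl
end
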